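/- Let A be symmetric with at least p simple negative smallest eigenvalues. Any two distinct stable fixed points of TriOFM-(Obj1), i.e., distinct matrices of the form U_p√(-Λ_p)D with D diagonal ±1, are at Frobenius distance at least 2√(-λ_p) from each other. -/

import Mathlib

open Matrix

/-- Frobenius norm of an `n × p` real matrix. -/
noncomputable def fnorm {n p : ℕ} (M : Matrix (Fin n) (Fin p) ℝ) : ℝ :=
  Real.sqrt (∑ j, ∑ k, (M j k) ^ 2)

/-- any two distinct stable fixed points `U_p√(-Λ_p)D`,
`U_p√(-Λ_p)D'` of TriOFM-(Obj1) (with `D, D'` diagonal `±1`) are at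
Frobenius distance at least `2√(-λ_p)` from each other. -/
theorem stmt14 {n p : ℕ} (hp : 0 < p)
    (ev : Fin p → ℝ) (u : Fin p → Fin n → ℝ)
    (hmono : Monotone ev) (hneg : ∀ k, ev k < 0)
    (horthonormal : ∀ k l, u k ⬝ᵥ u l = if k = l then (1 : ℝ) else 0)
    (d d' : Fin p → ℝ)
    (hd : ∀ k, d k = 1 ∨ d k = -1) (hd' : ∀ k, d' k = 1 ∨ d' k = -1)
    (hne : d ≠ d') :
    2 * Real.sqrt (-(ev ⟨p - 1, by omega⟩))
      ≤ fnorm ((fun j k => d k * Real.sqrt (-(ev k)) * u k j)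
          - (fun j k => d' k * Real.sqrt (-(ev k)) * u k j)
            : Matrix (Fin n) (Fin p) ℝ) := by
  obtain ⟨k0, hk0⟩ := Function.ne_iff.mp hne
  have hdk : (d k0 - d' k0) ^ 2 = 4 := by
    rcases hd k0 with h1 | h1 <;> rcases hd' k0 with h2 | h2 <;>
      rw [h1, h2] at hk0 ⊢ <;> norm_num at hk0 <;> norm_num
  set last : Fin p := ⟨p - 1, by omega⟩ with hlast
  unfold fnorm
  rw [Finset.sum_comm]
  have hcol : ∀ k : Fin p,
      (∑ j, (((fun j k => d k * Real.sqrt (-(ev k)) * u k j)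
          - (fun j k => d' k * Real.sqrt (-(ev k)) * u k j)
            : Matrix (Fin n) (Fin p) ℝ) j k) ^ 2)
        = (d k - d' k) ^ 2 * (-(ev k)) := by
    intro k
    have h1 : ∑ j, (u k j) ^ 2 = 1 := by
      have := horthonormal k k
      simpa [dotProduct, pow_two] using this
    have hsq : (Real.sqrt (-(ev k))) ^ 2 = -(ev k) :=
      Real.sq_sqrt (by linarith [hneg k])
    calc ∑ j, (((fun j k => d k * Real.sqrt (-(ev k)) * u k j)
          - (fun j k => d' k * Real.sqrt (-(ev k)) * u k j)
            : Matrix (Fin n) (Fin p) ℝ) j k) ^ 2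
        = ∑ j, (d k - d' k) ^ 2 * (-(ev k)) * (u k j) ^ 2 := by
          apply Finset.sum_congr rfl
          intro j _
          show (d k * Real.sqrt (-(ev k)) * u k j
              - d' k * Real.sqrt (-(ev k)) * u k j) ^ 2 = _
          conv_rhs => rw [← hsq]
          ring
      _ = (d k - d' k) ^ 2 * (-(ev k)) := by
          rw [← Finset.mul_sum, h1, mul_one]
  rw [Finset.sum_congr rfl fun k _ => hcol k]
  have hlb : 4 * (-(ev last)) ≤ ∑ k, (d k - d' k) ^ 2 * (-(ev k)) := by
    have h1 : 4 * (-(ev last)) ≤ (d k0 - d' k0) ^ 2 * (-(ev k0)) := by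
      rw [hdk]
      have : ev k0 ≤ ev last := hmono (by
        simp [hlast, Fin.le_def]; omega)
      nlinarith
    refine le_trans h1 (Finset.single_le_sum (f := fun k => (d k - d' k) ^ 2 * (-(ev k))) (fun k _ => ?_) (Finset.mem_univ k0))
    show (0:ℝ) ≤ (d k - d' k) ^ 2 * -ev k
    nlinarith [hneg k, sq_nonneg (d k - d' k)]
  have h4 : Real.sqrt (4 * (-(ev last))) = 2 * Real.sqrt (-(ev last)) := by
    rw [Real.sqrt_mul (by norm_num), show Real.sqrt 4 = 2 by
      rw [show (4:ℝ) = 2 ^ 2 by norm_num, Real.sqrt_sq (by norm_num)]]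
  rw [← h4]
  exact Real.sqrt_le_sqrt hlb
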